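/- arXiv:1208.5530 — 6 statements merged into one kernel-verified Lean document; each statement's English description precedes it below -/
import Mathlib

section
/- Let A be a closed symmetric operator in a Hilbert space H and z a non-real complex number. If ψ lies in the deficiency subspace N_z = H ⊖ ran(A - z·I) and φ lies in N_{z̄} = H ⊖ ran(A - z̄·I), and φ - ψ belongs to the domain of A, then ‖φ‖ = ‖ψ‖. -/
/-- For a closed symmetric operator `A` and nonreal `z`, if `ψ ∈ N_z(A)`, `φ ∈ N_{z̄}(A)`
and `φ - ψ ∈ D(A)`, then `‖φ‖ = ‖ψ‖`. -/
theorem stmt4 {H : Type*} [NormedAddCommGroup H] [InnerProductSpace ℂ H] [CompleteSpace H]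
    (D : Submodule ℂ H) (A : D →ₗ[ℂ] H)
    (hsym : ∀ f g : D, (inner ℂ (A f) (g : H) : ℂ) = inner ℂ (f : H) (A g))
    (hclosed : IsClosed {p : H × H | ∃ f : D, p.1 = (f : H) ∧ p.2 = A f})
    (z : ℂ) (hz : z.im ≠ 0)
    (ψ φ : H)
    (hψ : ψ ∈ (LinearMap.range (A - z • D.subtype))ᗮ)
    (hφ : φ ∈ (LinearMap.range (A - (starRingEnd ℂ) z • D.subtype))ᗮ)
    (hdiff : φ - ψ ∈ D) :
    ‖φ‖ = ‖ψ‖ := by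
  set f : D := ⟨φ - ψ, hdiff⟩ with hf
  have h1 := (Submodule.mem_orthogonal _ ψ).mp hψ ((A - z • D.subtype) f)
    (LinearMap.mem_range_self _ f)
  have h2 := (Submodule.mem_orthogonal _ φ).mp hφ ((A - (starRingEnd ℂ) z • D.subtype) f)
    (LinearMap.mem_range_self _ f)
  have h3 := hsym f f
  simp only [LinearMap.sub_apply, LinearMap.smul_apply, Submodule.coe_subtype, hf,
    inner_sub_left, inner_sub_right, inner_smul_left, sub_eq_zero] at h1 h2 h3
  have hc : ∀ x y : H, (inner ℂ x y : ℂ) = (starRingEnd ℂ) (inner ℂ y x) :=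
    fun x y => (inner_conj_symm x y).symm
  rw [hc φ (A ⟨φ - ψ, hdiff⟩), hc ψ (A ⟨φ - ψ, hdiff⟩), h1, h2] at h3
  simp only [map_mul, map_sub, Complex.conj_conj, inner_conj_symm] at h3
  have key : (z - (starRingEnd ℂ) z) * ((inner ℂ φ φ : ℂ) - (inner ℂ ψ ψ : ℂ)) = 0 := by
    linear_combination h3
  rw [inner_self_eq_norm_sq_to_K, inner_self_eq_norm_sq_to_K] at key
  have hzz : z - (starRingEnd ℂ) z ≠ 0 := by
    rw [sub_ne_zero]
    exact fun h => hz (Complex.conj_eq_iff_im.mp h.symm)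
  have hpq : ((‖φ‖ : ℂ)^2 : ℂ) = (‖ψ‖ : ℂ)^2 :=
    sub_eq_zero.mp ((mul_eq_zero.mp key).resolve_left hzz)
  have h4 : ‖φ‖^2 = ‖ψ‖^2 := by exact_mod_cast hpq
  nlinarith [norm_nonneg φ, norm_nonneg ψ]
end

section
/- Let W be a non-expanding operator in a Hilbert space H, having no non-zero fixed elements (Wg = g implies g = 0), and let z be a non-real complex number. Define B = z·I + (z - z̄)(W - I)⁻¹ on D(B) = (W - I)D(W). Then for every f = (W - I)g ∈ D(B), Im(Bf, f) = (Im z)·(‖Wg‖² - ‖g‖²); in particular, if Im z < 0 and ‖Wg‖ ≤ ‖g‖ for all g ∈ D(W), then B is dissipative. -/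
/-- For a non-expanding `W` without non-zero fixed points and nonreal `z`, the operator
`B = z + (z - z̄)(W - 1)⁻¹` satisfies, for `f = (W-1)g`,
`Im(Bf, f) = (Im z)(‖Wg‖² - ‖g‖²)`; in particular `B` is dissipative when `Im z < 0`. -/
theorem stmt9 {H : Type*} [NormedAddCommGroup H] [InnerProductSpace ℂ H]
    (D : Submodule ℂ H) (W : D →ₗ[ℂ] H)
    (hW : ∀ g : D, ‖W g‖ ≤ ‖g‖)
    (hfix : ∀ g : D, W g = (g : H) → g = 0)
    (z : ℂ) (hz : z.im ≠ 0) :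
    ∀ g : D,
      (inner ℂ (W g - (g : H))
          (z • (W g - (g : H)) + (z - (starRingEnd ℂ) z) • (g : H)) : ℂ).im
        = z.im * (‖W g‖ ^ 2 - ‖(g : H)‖ ^ 2) ∧
      (z.im < 0 →
        0 ≤ (inner ℂ (W g - (g : H))
            (z • (W g - (g : H)) + (z - (starRingEnd ℂ) z) • (g : H)) : ℂ).im) := by
  intro g
  set u := W g with hu
  set v := (g : H) with hv
  have key : (inner ℂ (u - v) (z • (u - v) + (z - (starRingEnd ℂ) z) • v) : ℂ)
      = z * (inner ℂ (u - v) (u - v) : ℂ) + (z - (starRingEnd ℂ) z) * (inner ℂ (u - v) v : ℂ) := by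
    simp [inner_add_right, inner_smul_right]
  have hself : (inner ℂ (u - v) (u - v) : ℂ) = (‖u - v‖ : ℂ) ^ 2 := by
    exact inner_self_eq_norm_sq_to_K (u - v)
  have hnorm : ‖u - v‖ ^ 2 = ‖u‖ ^ 2 - 2 * (inner ℂ u v : ℂ).re + ‖v‖ ^ 2 := by
    exact @norm_sub_sq ℂ _ _ _ _ u v
  have hsub : (inner ℂ (u - v) v : ℂ) = (inner ℂ u v : ℂ) - (‖v‖ : ℂ) ^ 2 := by
    rw [inner_sub_left, inner_self_eq_norm_sq_to_K]
    norm_cast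
  have him : (inner ℂ (u - v) (z • (u - v) + (z - (starRingEnd ℂ) z) • v) : ℂ).im
      = z.im * (‖u‖ ^ 2 - ‖v‖ ^ 2) := by
    rw [key, hself, hsub]
    have := hnorm
    simp only [← Complex.ofReal_pow, Complex.add_im, Complex.mul_im, Complex.sub_re,
      Complex.sub_im, Complex.conj_re, Complex.conj_im, Complex.ofReal_im, Complex.ofReal_re]
    rw [this]; ring
  refine ⟨him, fun hzneg => ?_⟩
  rw [him]
  have h1 : ‖u‖ ^ 2 - ‖v‖ ^ 2 ≤ 0 := by
    show ‖W g‖ ^ 2 - ‖(g : H)‖ ^ 2 ≤ 0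
    have h2 := pow_le_pow_left₀ (norm_nonneg (W g)) (hW g) 2
    simp only [Submodule.coe_norm] at *
    linarith
  nlinarith
end

section
/- Let V be a closed isometric operator in a Hilbert space H and W a linear non-expanding operator in H with W ⊇ V (W extends V). Then W = V ⊕ T, where T = W restricted to D(W) ∩ (H ⊖ D(V)) is a linear non-expanding operator with domain contained in H ⊖ D(V) and range contained in H ⊖ ran(V); moreover D(W) = D(V) ⊕ D(T) (orthogonal direct sum of linear manifolds). -/
open scoped ComplexInnerProductSpace in
/-- A non-expanding extension `W` of a closed isometric operator `V` decomposes as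
`W = V ⊕ T` with `T = W|_{D(W) ∩ (D(V))ᗮ}` mapping into `(ran V)ᗮ`, and
`D(W) = D(V) ⊕ D(T)`. -/
theorem stmt10 {H : Type*} [NormedAddCommGroup H] [InnerProductSpace ℂ H] [CompleteSpace H]
    (DV DW : Submodule ℂ H) (hDVclosed : IsClosed (DV : Set H)) (hle : DV ≤ DW)
    (V : DV →ₗ[ℂ] H) (hViso : ∀ x : DV, ‖V x‖ = ‖x‖)
    (W : DW →ₗ[ℂ] H) (hWnon : ∀ x : DW, ‖W x‖ ≤ ‖x‖)
    (hext : ∀ x : DV, W ⟨(x : H), hle x.2⟩ = V x) :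
    (∀ x : DW, (x : H) ∈ DVᗮ → W x ∈ (LinearMap.range V)ᗮ) ∧
      (∀ f : DW, ∃ f₁ f₂ : H, f₁ ∈ DV ∧ f₂ ∈ DVᗮ ∧ f₂ ∈ DW ∧ (f : H) = f₁ + f₂) := by
  constructor
  · intro x hx
    rw [Submodule.mem_orthogonal]
    rintro u ⟨g, rfl⟩
    by_contra hne
    set a : ℂ := ⟪V g, W x⟫ with ha
    have key : ∀ t : ℂ, 2 * (t * a).re ≤ ‖t‖^2 * ‖(x:H)‖^2 := by
      intro t
      set y : DW := ⟨(g:H), hle g.2⟩ + t • x with hy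
      have hWy : W y = V g + t • W x := by
        rw [hy, map_add, map_smul, hext]
      have hiy : ⟪(g : H), t • (x : H)⟫ = 0 := by
        rw [inner_smul_right, hx g g.2, mul_zero]
      have hynorm : ‖(y : H)‖^2 = ‖(g:H)‖^2 + ‖t‖^2 * ‖(x:H)‖^2 := by
        have : (y : H) = (g : H) + t • (x : H) := rfl
        rw [this, norm_add_sq (𝕜 := ℂ), hiy, norm_smul]
        simp
        ring
      have hWnorm : ‖W y‖^2 = ‖(g:H)‖^2 + 2 * (t * a).re + ‖t‖^2 * ‖W x‖^2 := by
        rw [hWy, norm_add_sq (𝕜 := ℂ), inner_smul_right, norm_smul, hViso]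
        have : ‖g‖ = ‖(g:H)‖ := rfl
        rw [this]
        simp [← ha]
        ring
      have h1 : ‖W y‖ ≤ ‖y‖ := hWnon y
      have h2 : ‖W y‖^2 ≤ ‖y‖^2 := pow_le_pow_left₀ (norm_nonneg _) h1 2
      have h3 : ‖y‖ = ‖(y : H)‖ := rfl
      rw [h3, hynorm, hWnorm] at h2
      nlinarith [sq_nonneg (‖t‖ * ‖W x‖), sq_nonneg ‖t‖, norm_nonneg (W x)]
    have hapos : (0:ℝ) < ‖a‖^2 := by
      have := norm_pos_iff.mpr hne
      positivity
    set s : ℝ := 1 / (‖(x:H)‖^2 + 2) with hs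
    have hspos : 0 < s := by positivity
    have hkey := key ((s : ℂ) * star a)
    have h4 : (((s : ℂ) * star a) * a).re = s * ‖a‖^2 := by
      have h : (star a) * a = ((Complex.normSq a : ℝ) : ℂ) := by
        rw [Complex.star_def, ← Complex.normSq_eq_conj_mul_self]
      rw [mul_assoc, h, ← Complex.ofReal_mul, Complex.ofReal_re,
        Complex.normSq_eq_norm_sq]
    have h5 : ‖(s : ℂ) * star a‖^2 = s^2 * ‖a‖^2 := by
      rw [norm_mul, norm_star, Complex.norm_real, mul_pow, Real.norm_eq_abs,
        abs_of_pos hspos]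
    rw [h4, h5] at hkey
    have h6 : s * (‖(x:H)‖^2) < 1 := by
      rw [hs]
      rw [div_mul_eq_mul_div, one_mul, div_lt_one (by positivity)]
      linarith
    nlinarith [mul_pos hspos hapos, mul_lt_mul_of_pos_left h6 (mul_pos hspos hapos)]
  · intro f
    haveI : CompleteSpace DV := hDVclosed.completeSpace_coe
    refine ⟨Submodule.orthogonalProjection DV f, (f : H) - Submodule.orthogonalProjection DV f,
      (Submodule.orthogonalProjection DV f).2, DV.sub_starProjection_mem_orthogonal (f : H),
      ?_, (add_sub_cancel _ _).symm⟩
    exact DW.sub_mem f.2 (hle (Submodule.orthogonalProjection DV f).2)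
end

section
/- Let H₁ and H₂ be subspaces of the same Hilbert dimension in a Hilbert space H. Then there exists an isometric linear operator V with domain H₁ and range H₂ that has no non-zero fixed points (Vh = h implies h = 0). -/
open Complex

local notation "⟪" x ", " y "⟫" => @inner ℂ _ _ x y

/-- If `H₁` and `H₂` are closed subspaces of the same Hilbert dimension in a Hilbert
space, then there exists an isometric linear operator with domain `H₁` and range `H₂`
having no non-zero fixed points. -/
theorem stmt11 {H : Type*} [NormedAddCommGroup H] [InnerProductSpace ℂ H] [CompleteSpace H]
    (H₁ H₂ : Submodule ℂ H) (hc1 : IsClosed (H₁ : Set H)) (hc2 : IsClosed (H₂ : Set H))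
    (hdim : Nonempty (H₁ ≃ₗᵢ[ℂ] H₂)) :
    ∃ V : H₁ →ₗ[ℂ] H, (∀ x : H₁, ‖V x‖ = ‖x‖) ∧ LinearMap.range V = H₂ ∧
      ∀ x : H₁, V x = (x : H) → x = 0 := by
  obtain ⟨W⟩ := hdim
  haveI : CompleteSpace H₁ := hc1.completeSpace_coe
  -- the "bad" eigenspace E = {x : W x = -i • x}
  set f : ↥H₁ →ₗ[ℂ] H :=
    H₂.subtype ∘ₗ (W.toLinearEquiv : ↥H₁ →ₗ[ℂ] ↥H₂) + Complex.I • H₁.subtype with hf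
  set E : Submodule ℂ ↥H₁ := LinearMap.ker f with hE
  have hEmem : ∀ x : ↥H₁, x ∈ E ↔ (W x : H) = -(Complex.I • (x : H)) := by
    intro x
    simp only [hE, hf, LinearMap.mem_ker, LinearMap.add_apply, LinearMap.comp_apply,
      LinearMap.smul_apply, Submodule.coe_subtype, LinearEquiv.coe_coe,
      LinearIsometryEquiv.coe_toLinearEquiv]
    constructor
    · intro h; exact eq_neg_of_add_eq_zero_left h
    · intro h; rw [h]; exact neg_add_cancel _
  have hEclosed : IsClosed (E : Set ↥H₁) := by
    have hcont : Continuous fun x : ↥H₁ => f x := by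
      simp only [hf, LinearMap.add_apply, LinearMap.comp_apply, LinearMap.smul_apply,
        Submodule.coe_subtype, LinearEquiv.coe_coe, LinearIsometryEquiv.coe_toLinearEquiv]
      exact (continuous_subtype_val.comp W.continuous).add
        (continuous_subtype_val.const_smul Complex.I)
    have : (E : Set ↥H₁) = (fun x : ↥H₁ => f x) ⁻¹' {0} := by
      ext x; simp [hE, LinearMap.mem_ker]
    rw [this]
    exact isClosed_singleton.preimage hcont
  haveI : CompleteSpace E := hEclosed.completeSpace_coe
  set P : ↥H₁ →L[ℂ] E := E.orthogonalProjectionOnto with hP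
  set u : ↥H₁ →ₗ[ℂ] ↥H₁ :=
    LinearMap.id + (Complex.I - 1) • (E.subtype ∘ₗ (P : ↥H₁ →ₗ[ℂ] E)) with hu
  have hux : ∀ x : ↥H₁, u x = Complex.I • (P x : ↥H₁) + (x - (P x : ↥H₁)) := by
    intro x
    simp only [hu, LinearMap.add_apply, LinearMap.id_apply, LinearMap.smul_apply,
      LinearMap.comp_apply, Submodule.coe_subtype, ContinuousLinearMap.coe_coe]
    module
  set V : ↥H₁ →ₗ[ℂ] H :=
    Complex.I • (H₂.subtype ∘ₗ (W.toLinearEquiv : ↥H₁ →ₗ[ℂ] ↥H₂) ∘ₗ u) with hV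
  have hVx : ∀ x : ↥H₁, V x = Complex.I • (W (u x) : H) := by
    intro x
    simp [hV]
  -- orthogonality facts
  have hx2mem : ∀ x : ↥H₁, x - (P x : ↥H₁) ∈ Eᗮ := fun x =>
    E.sub_starProjection_mem_orthogonal x
  have hinner12 : ∀ x : ↥H₁, ⟪((P x : ↥H₁) : ↥H₁), x - (P x : ↥H₁)⟫ = 0 := by
    intro x
    exact (Submodule.mem_orthogonal E _).1 (hx2mem x) _ (P x).2
  -- u is an isometry
  have hunorm : ∀ x : ↥H₁, ‖u x‖ = ‖x‖ := by
    intro x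
    have h1 : ⟪(Complex.I • (P x : ↥H₁) : ↥H₁), x - (P x : ↥H₁)⟫ = 0 := by
      rw [inner_smul_left, hinner12 x, mul_zero]
    have e1 : ‖u x‖ * ‖u x‖ = ‖x‖ * ‖x‖ := by
      rw [hux x, norm_add_sq_eq_norm_sq_add_norm_sq_of_inner_eq_zero _ _ h1]
      have e2 : ‖x‖ * ‖x‖ = ‖(P x : ↥H₁)‖ * ‖(P x : ↥H₁)‖
          + ‖x - (P x : ↥H₁)‖ * ‖x - (P x : ↥H₁)‖ := by
        conv_lhs => rw [show x = (P x : ↥H₁) + (x - (P x : ↥H₁)) by abel]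
        rw [norm_add_sq_eq_norm_sq_add_norm_sq_of_inner_eq_zero _ _ (hinner12 x)]
      rw [e2, norm_smul]
      simp
    exact (mul_self_inj (norm_nonneg _) (norm_nonneg _)).1 e1
  -- inverse of u
  set u' : ↥H₁ →ₗ[ℂ] ↥H₁ :=
    LinearMap.id + (-Complex.I - 1) • (E.subtype ∘ₗ (P : ↥H₁ →ₗ[ℂ] E)) with hu'
  have hPcoe : ∀ y : E, P ((y : ↥H₁)) = y := fun y =>
    Submodule.orthogonalProjectionOnto_mem_subspace_eq_self y
  have huu' : ∀ x : ↥H₁, u (u' x) = x := by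
    intro x
    have hu'x : u' x = x + (-Complex.I - 1) • ((P x : ↥H₁)) := by
      simp [hu', LinearMap.add_apply]
    have hPu' : P (u' x) = P x + (-Complex.I - 1) • P x := by
      rw [hu'x, map_add, map_smul, hPcoe]
    have : u (u' x) = u' x + (Complex.I - 1) • ((P (u' x) : ↥H₁)) := by
      simp [hu, LinearMap.add_apply]
    rw [this, hPu', hu'x]
    push_cast
    match_scalars <;> first
      | ring1
      | linear_combination Complex.I_mul_I
      | linear_combination -Complex.I_mul_I
  refine ⟨V, ?_, ?_, ?_⟩
  · intro x
    rw [hVx x, norm_smul]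
    simp only [Complex.norm_I, one_mul]
    rw [show ‖(W (u x) : H)‖ = ‖W (u x)‖ from rfl, W.norm_map, hunorm]
  · apply le_antisymm
    · rintro y ⟨x, rfl⟩
      rw [hVx x]
      exact H₂.smul_mem _ (W (u x)).2
    · intro y hy
      have hz : (-Complex.I) • y ∈ H₂ := H₂.smul_mem _ hy
      refine ⟨u' (W.symm ⟨(-Complex.I) • y, hz⟩), ?_⟩
      rw [hVx, huu', LinearIsometryEquiv.apply_symm_apply]
      simp [smul_smul]
  · intro x hfix
    rw [hVx x] at hfix
    set x₁ : ↥H₁ := (P x : ↥H₁) with hx1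
    set x₂ : ↥H₁ := x - x₁ with hx2
    have hx1E : x₁ ∈ E := (P x).2
    have hWx1 : (W x₁ : H) = -(Complex.I • (x₁ : H)) := (hEmem x₁).1 hx1E
    have hW : (W (u x) : H) = (x₁ : H) + (W x₂ : H) := by
      rw [hux x, ← hx1, ← hx2, map_add, map_smul]
      push_cast
      rw [hWx1]
      rw [smul_neg, smul_smul, Complex.I_mul_I]
      module
    rw [hW] at hfix
    -- hfix : I • ((x₁ : H) + (W x₂ : H)) = (x : H)
    have hxsplit : (x : H) = (x₁ : H) + (x₂ : H) := by
      rw [hx2]; push_cast; abel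
    -- inner products with x₁
    have hiab : ⟪((x₁ : ↥H₁) : H), ((x₂ : ↥H₁) : H)⟫ = 0 := by
      rw [← Submodule.coe_inner]
      exact hinner12 x
    have hiw : ⟪((x₁ : ↥H₁) : H), ((W x₂ : ↥H₂) : H)⟫ = 0 := by
      have ha : ((x₁ : ↥H₁) : H) = Complex.I • ((W x₁ : ↥H₂) : H) := by
        rw [hWx1, smul_neg, smul_smul, Complex.I_mul_I]; module
      rw [ha, inner_smul_left, ← Submodule.coe_inner, W.inner_map_map,
        Submodule.coe_inner, hiab, mul_zero]
    have key : Complex.I * ⟪((x₁:↥H₁):H), ((x₁:↥H₁):H)⟫ = ⟪((x₁:↥H₁):H), ((x₁:↥H₁):H)⟫ := by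
      have := congrArg (fun z => ⟪((x₁ : ↥H₁) : H), z⟫) hfix
      simp only [hxsplit, inner_add_right, inner_smul_right] at this ⊢
      rw [hiw, hiab] at this
      linear_combination this
    have hx10 : x₁ = 0 := by
      have hre : ⟪((x₁:↥H₁):H), ((x₁:↥H₁):H)⟫ = 0 := by
        have h0 : (Complex.I - 1) * ⟪((x₁:↥H₁):H), ((x₁:↥H₁):H)⟫ = 0 := by
          linear_combination key
        rcases mul_eq_zero.1 h0 with h | h
        · exfalso
          rw [sub_eq_zero] at h
          simp [Complex.ext_iff] at h
        · exact h
      have := inner_self_eq_zero.1 hre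
      exact Subtype.ext this
    have hx20 : x₂ = 0 := by
      have hfix2 : Complex.I • ((W x₂ : ↥H₂) : H) = (x₂ : H) := by
        rw [hx10] at hfix hxsplit
        simp only [Submodule.coe_zero, zero_add] at hfix hxsplit
        rw [← hxsplit]; exact hfix
      have hx2E : x₂ ∈ E := by
        rw [hEmem]
        have := congrArg (fun z => (-Complex.I) • z) hfix2
        simp only [smul_smul] at this
        rw [show -Complex.I * Complex.I = 1 by simp [Complex.I_mul_I], one_smul] at this
        rw [this]
        module
      have hx2orth : x₂ ∈ Eᗮ := hx2mem x
      have : ⟪x₂, x₂⟫ = 0 := (Submodule.mem_orthogonal E x₂).1 hx2orth x₂ hx2E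
      exact inner_self_eq_zero.1 this
    have : x = x₁ + x₂ := by rw [hx2]; abel
    rw [this, hx10, hx20, add_zero]
end

section
/- Let V be a closed isometric operator in a Hilbert space H and ζ a point on the unit circle. Then for every f in the deficiency subspace N_ζ(V) = H ⊖ (I - ζV)D(V), one has V·P_{D(V)} f = ζ⁻¹·P_{ran V} f, where P_{D(V)} and P_{ran V} are the orthogonal projections onto D(V) and ran(V); consequently ‖P_{D(V)} f‖ = ‖P_{ran V} f‖ and ‖P_{H⊖D(V)} f‖ = ‖P_{H⊖ran V} f‖. -/
/-- For a closed isometric operator `V` and `|ζ| = 1`, every `f` in the deficiency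
subspace `N_ζ(V) = (I - ζV)D(V))ᗮ` satisfies `V·P_{D(V)}f = ζ⁻¹·P_{ran V}f`; hence
`‖P_{D(V)}f‖ = ‖P_{ran V}f‖` and `‖P_{D(V)ᗮ}f‖ = ‖P_{(ran V)ᗮ}f‖`. -/
theorem stmt13 {H : Type*} [NormedAddCommGroup H] [InnerProductSpace ℂ H] [CompleteSpace H]
    (DV : Submodule ℂ H) [CompleteSpace DV]
    (V : DV →ₗ[ℂ] H) (hViso : ∀ x : DV, ‖V x‖ = ‖x‖)
    [CompleteSpace (LinearMap.range V)]
    (ζ : ℂ) (hζ : ‖ζ‖ = 1)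
    (f : H) (hf : ∀ g : DV, (inner ℂ f ((g : H) - ζ • V g) : ℂ) = 0) :
    V (Submodule.orthogonalProjectionOnto DV f)
        = ζ⁻¹ • (Submodule.orthogonalProjectionOnto (LinearMap.range V) f : H) ∧
      ‖(Submodule.orthogonalProjectionOnto DV f : H)‖
        = ‖(Submodule.orthogonalProjectionOnto (LinearMap.range V) f : H)‖ ∧
      ‖f - (Submodule.orthogonalProjectionOnto DV f : H)‖
        = ‖f - (Submodule.orthogonalProjectionOnto (LinearMap.range V) f : H)‖ := by
  have hζn : ‖ζ‖ = 1 := hζ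
  have hζinv : ζ⁻¹ = (starRingEnd ℂ) ζ := Complex.inv_eq_conj hζn
  set Vi : DV →ₗᵢ[ℂ] H := ⟨V, hViso⟩ with hVi
  set P : H := (Submodule.orthogonalProjectionOnto DV f : H) with hP
  set Q : H := (Submodule.orthogonalProjectionOnto (LinearMap.range V) f : H) with hQ
  -- f - P ⟂ DV, f - Q ⟂ range V
  have hfP : ∀ g : DV, (inner ℂ (f - P) (g : H) : ℂ) = 0 := fun g =>
    inner_eq_zero_symm.mp ((Submodule.sub_starProjection_mem_orthogonal (K := DV) f) g g.2)
  have hfQ : ∀ g : DV, (inner ℂ (f - Q) (V g) : ℂ) = 0 := fun g =>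
    inner_eq_zero_symm.mp
      ((Submodule.sub_starProjection_mem_orthogonal (K := LinearMap.range V) f) (V g) ⟨g, rfl⟩)
  -- Q ∈ range V
  obtain ⟨u, hu⟩ : ∃ u : DV, V u = Q :=
    (Submodule.orthogonalProjectionOnto (LinearMap.range V) f).2
  -- main identity on inner products
  have key : ∀ g : DV, (inner ℂ (P - (starRingEnd ℂ) ζ • (u : H)) (g : H) : ℂ) = 0 := by
    intro g
    have h1 : (inner ℂ f (g : H) : ℂ) = ζ * inner ℂ f (V g) := by
      have := hf g
      rw [inner_sub_right, inner_smul_right, sub_eq_zero] at this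
      exact this
    have h2 : (inner ℂ P (g : H) : ℂ) = inner ℂ f (g : H) := by
      have := hfP g
      rw [inner_sub_left, sub_eq_zero] at this
      exact this.symm
    have h3 : (inner ℂ Q (V g) : ℂ) = inner ℂ f (V g) := by
      have := hfQ g
      rw [inner_sub_left, sub_eq_zero] at this
      exact this.symm
    have h4 : (inner ℂ Q (V g) : ℂ) = inner ℂ (u : H) (g : H) := by
      rw [← hu]
      exact Vi.inner_map_map u g
    rw [inner_sub_left, inner_smul_left, starRingEnd_self_apply,
      h2, h1, ← h3, h4, sub_self]
  have hmem : P - (starRingEnd ℂ) ζ • (u : H) ∈ DV :=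
    DV.sub_mem (Submodule.orthogonalProjectionOnto DV f).2 (DV.smul_mem _ u.2)
  have hzero : P - (starRingEnd ℂ) ζ • (u : H) = 0 := by
    have := key ⟨_, hmem⟩
    rwa [inner_self_eq_zero] at this
  have hPu : P = (starRingEnd ℂ) ζ • (u : H) := by
    have := sub_eq_zero.mp hzero; exact this
  -- P as element of DV
  have hPu' : (Submodule.orthogonalProjectionOnto DV f : DV) = (starRingEnd ℂ) ζ • u := by
    ext; exact hPu
  have hmain : V (Submodule.orthogonalProjectionOnto DV f) = ζ⁻¹ • Q := by
    rw [hPu', map_smul, hu, hζinv]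
  have hnorm : ‖P‖ = ‖Q‖ := by
    have h5 : ‖V (Submodule.orthogonalProjectionOnto DV f)‖ = ‖Submodule.orthogonalProjectionOnto DV f‖ := hViso _
    rw [hmain, norm_smul, norm_inv, hζn, Submodule.coe_norm] at h5
    rw [hP, ← h5]; simp
  refine ⟨hmain, hnorm, ?_⟩
  · have e1 : ‖f - P‖ ^ 2 + ‖P‖ ^ 2 = ‖f‖ ^ 2 := by
      have h := norm_add_sq_eq_norm_sq_add_norm_sq_of_inner_eq_zero (f - P) P
        (inner_eq_zero_symm.mp ((Submodule.sub_starProjection_mem_orthogonal (K := DV) f) P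
          (Submodule.orthogonalProjectionOnto DV f).2))
      simp only [sub_add_cancel] at h
      simp only [pow_two]; linarith
    have e2 : ‖f - Q‖ ^ 2 + ‖Q‖ ^ 2 = ‖f‖ ^ 2 := by
      have h := norm_add_sq_eq_norm_sq_add_norm_sq_of_inner_eq_zero (f - Q) Q
        (inner_eq_zero_symm.mp
          ((Submodule.sub_starProjection_mem_orthogonal (K := LinearMap.range V) f) Q
            (Submodule.orthogonalProjectionOnto (LinearMap.range V) f).2))
      simp only [sub_add_cancel] at h
      simp only [pow_two]; linarith
    have : ‖f - P‖ ^ 2 = ‖f - Q‖ ^ 2 := by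
      rw [hnorm] at e1; linarith
    exact (sq_eq_sq₀ (norm_nonneg _) (norm_nonneg _)).mp this
end

section
/- Let U be a unitary operator in a Hilbert space H̃ extending a closed isometric operator V in a subspace H ⊆ H̃, and define the generalized resolvent R_ζ = P_H (I - ζU)⁻¹|_H for |ζ| ≠ 1. Then for every h ∈ H and every ζ in the open unit disc, Re(R_ζ h, h) ≥ ½‖h‖²; and for ζ with |ζ| > 1, Re(R_ζ h, h) ≤ ½‖h‖². -/
/-- For the generalized resolvent `R_ζ = P_K (I - ζU)⁻¹|_K` of an isometric operator
(with `U` unitary on `E ⊇ K`): `Re(R_ζ h, h) ≥ ½‖h‖²` for `|ζ| < 1` and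
`Re(R_ζ h, h) ≤ ½‖h‖²` for `|ζ| > 1`. Here `x` solves `(I - ζU)x = h`. -/
theorem stmt14 {E : Type*} [NormedAddCommGroup E] [InnerProductSpace ℂ E] [CompleteSpace E]
    (K : Submodule ℂ E) [CompleteSpace K]
    (U : E ≃ₗᵢ[ℂ] E)
    (ζ : ℂ) (h : K) (x : E) (hx : x - ζ • U x = (h : E)) :
    (‖ζ‖ < 1 →
      (1 / 2) * ‖(h : E)‖ ^ 2 ≤ (inner ℂ ((K.orthogonalProjection x : E)) (h : E) : ℂ).re) ∧
    (1 < ‖ζ‖ →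
      (inner ℂ ((K.orthogonalProjection x : E)) (h : E) : ℂ).re ≤ (1 / 2) * ‖(h : E)‖ ^ 2) := by
  have hproj : (inner ℂ ((K.orthogonalProjection x : E)) ((h : E)) : ℂ)
      = inner ℂ x ((h : E)) := by
    exact K.inner_orthogonalProjectionOnto_eq_of_mem_right h x
  set t : ℝ := (ζ * inner ℂ x (U x)).re with ht
  have hUx : ‖U x‖ = ‖x‖ := U.norm_map x
  have h1 : (inner ℂ x ((h : E)) : ℂ).re = ‖x‖ ^ 2 - t := by
    rw [← hx, inner_sub_right, inner_smul_right, ← inner_self_eq_norm_sq (𝕜 := ℂ)]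
    simp [ht]
  have h2 : ‖(h : E)‖ ^ 2 = ‖x‖ ^ 2 + ‖ζ‖ ^ 2 * ‖x‖ ^ 2 - 2 * t := by
    rw [← hx, @norm_sub_sq ℂ]
    rw [norm_smul, hUx, inner_smul_right]
    simp [ht, mul_pow]
    ring
  constructor <;> intro hζ <;> rw [hproj, h1] <;>
  · have key : (‖ζ‖ ^ 2 - 1) * ‖x‖ ^ 2 = (1 / 2) * ‖(h : E)‖ ^ 2 * 2
        - (‖x‖ ^ 2 - t) * 2 := by rw [h2]; ring
    nlinarith [mul_nonneg (sq_nonneg ‖x‖) (norm_nonneg ζ), sq_nonneg ‖x‖,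
      norm_nonneg ζ, mul_le_mul_of_nonneg_right (mul_le_mul_of_nonneg_left hζ.le
        (norm_nonneg ζ)) (sq_nonneg ‖x‖)]
end
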